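/- Let T be a tree with node set {1, ..., K}, and for each node i let C_i be a finite set, such that the running intersection property holds: for nodes i, j and any k on the path from i to j in T, C_i ∩ C_j ⊆ C_k. Let M be a finite set, and suppose probability mass functions q_i on M^{C_i} are consistent: for every edge (i,l) of T, the marginals of q_i and q_l on M^{C_i ∩ C_l} coincide. Then there exists a probability mass function q on M^{∪_i C_i} whose marginal on M^{C_i} equals q_i for every i. -/

import Mathlib

open Finset

section marg
variable {α β γ M : Type*} [Fintype α] [Fintype β] [Fintype γ]
  [DecidableEq α] [DecidableEq β] [DecidableEq γ] [Fintype M] [DecidableEq M]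

/-- Marginal of a mass function on `α → M` along a map `f : β → α`. -/
def margTo (f : β → α) (Q : (α → M) → ℝ) (b : β → M) : ℝ :=
  ∑ m : α → M, if ∀ x, m (f x) = b x then Q m else 0

lemma margTo_nonneg (f : β → α) (Q : (α → M) → ℝ) (h : ∀ m, 0 ≤ Q m) (b : β → M) :
    0 ≤ margTo f Q b :=
  Finset.sum_nonneg fun m _ => by split_ifs; exacts [h m, le_rfl]

lemma forall_eq_iff' (f : β → α) (m : α → M) (b : β → M) :
    (∀ x, m (f x) = b x) ↔ b = fun x => m (f x) := by
  rw [funext_iff]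
  exact ⟨fun h x => (h x).symm, fun h x => (h x).symm⟩

lemma sum_margTo (f : β → α) (Q : (α → M) → ℝ) :
    ∑ b : β → M, margTo f Q b = ∑ m : α → M, Q m := by
  unfold margTo
  rw [Finset.sum_comm]
  refine Finset.sum_congr rfl fun m _ => ?_
  simp_rw [forall_eq_iff' f m]
  simp

lemma margTo_comp (f : β → α) (g : γ → β) (Q : (α → M) → ℝ) (c : γ → M) :
    margTo g (margTo f Q) c = margTo (f ∘ g) Q c := by
  unfold margTo
  have h1 : ∀ b : β → M,
      (if ∀ x, b (g x) = c x then (∑ m : α → M, if ∀ x, m (f x) = b x then Q m else 0) else 0)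
      = ∑ m : α → M, if ∀ x, m (f x) = b x then (if ∀ x, b (g x) = c x then Q m else 0) else 0 := by
    intro b
    split_ifs with h
    · rfl
    · simp [h]
  simp_rw [h1]
  rw [Finset.sum_comm]
  refine Finset.sum_congr rfl fun m _ => ?_
  simp_rw [forall_eq_iff' f m]
  rw [Finset.sum_ite_eq' Finset.univ (fun x => m (f x))
    (fun b => if ∀ x, b (g x) = c x then Q m else 0)]
  simp only [Finset.mem_univ, if_true]
  rfl

lemma le_margTo (f : β → α) (Q : (α → M) → ℝ) (h : ∀ m, 0 ≤ Q m) (b : β → M)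
    (m : α → M) (hm : ∀ x, m (f x) = b x) : Q m ≤ margTo f Q b := by
  have := Finset.single_le_sum
    (f := fun m : α → M => if ∀ x, m (f x) = b x then Q m else 0)
    (fun m _ => by split_ifs; exacts [h m, le_rfl]) (Finset.mem_univ m)
  simp only [if_pos hm] at this
  exact this

lemma margTo_of_isEmpty [IsEmpty β] (f : β → α) (Q : (α → M) → ℝ) (b : β → M) :
    margTo f Q b = ∑ m : α → M, Q m := by
  unfold margTo
  refine Finset.sum_congr rfl fun m _ => ?_
  rw [if_pos (fun x => isEmptyElim x)]

end marg
section step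
variable {V M : Type*} [Fintype V] [DecidableEq V] [Fintype M] [DecidableEq M]

def glue (B : Finset V) (y : {v // v ∈ B} → M) (c : {v // ¬ v ∈ B} → M) : V → M :=
  fun v => if h : v ∈ B then y ⟨v, h⟩ else c ⟨v, h⟩

lemma sum_glue (B : Finset V) (F : (V → M) → ℝ) :
    ∑ m : V → M, F m = ∑ y : {v // v ∈ B} → M, ∑ c : {v // ¬ v ∈ B} → M, F (glue B y c) := by
  rw [← Equiv.sum_comp (Equiv.piEquivPiSubtypeProd (fun v => v ∈ B) fun _ => M).symm F,
    Fintype.sum_prod_type]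
  rfl

lemma glue_of_mem (B : Finset V) (y : {v // v ∈ B} → M) (c : {v // ¬ v ∈ B} → M)
    {v : V} (h : v ∈ B) : glue B y c v = y ⟨v, h⟩ := dif_pos h

lemma glue_of_not_mem (B : Finset V) (y : {v // v ∈ B} → M) (c : {v // ¬ v ∈ B} → M)
    {v : V} (h : ¬ v ∈ B) : glue B y c v = c ⟨v, h⟩ := dif_neg h

lemma step [Inhabited M] (Q : (V → M) → ℝ) (hQ0 : ∀ m, 0 ≤ Q m)
    (D S : Finset V) (hSD : S ⊆ D)
    (qD : ({v // v ∈ D} → M) → ℝ) (hqD0 : ∀ x, 0 ≤ qD x)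
    (hmatch : ∀ s : {v // v ∈ S} → M,
      margTo Subtype.val Q s
        = margTo (fun v : {v // v ∈ S} => (⟨v.1, hSD v.2⟩ : {v // v ∈ D})) qD s) :
    ∃ Q' : (V → M) → ℝ, (∀ m, 0 ≤ Q' m)
      ∧ (∀ e : {v // v ∈ D} → M, margTo Subtype.val Q' e = qD e)
      ∧ (∀ E : Finset V, (∀ v ∈ E, v ∉ D \ S) →
          ∀ e : {v // v ∈ E} → M, margTo Subtype.val Q' e = margTo Subtype.val Q e) := by
  classical
  set B : Finset V := D \ S with hB
  have hBD : B ⊆ D := Finset.sdiff_subset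
  have hSB : ∀ v : V, v ∈ S → ¬ v ∈ B := fun v hv hvB => (Finset.mem_sdiff.mp hvB).2 hv
  set Z : ({v // v ∈ S} → M) → ℝ :=
    margTo (fun v : {v // v ∈ S} => (⟨v.1, hSD v.2⟩ : {v // v ∈ D})) qD with hZ
  have hZ0 : ∀ s, 0 ≤ Z s := margTo_nonneg _ qD hqD0
  set resS : (V → M) → ({v // v ∈ S} → M) := fun m v => m v.1 with hresS
  set resD : (V → M) → ({v // v ∈ D} → M) := fun m v => m v.1 with hresD
  set r : (V → M) → ℝ := fun m =>
    if Z (resS m) = 0 then (if (∀ v : {v // v ∈ B}, m v.1 = default) then 1 else 0)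
    else qD (resD m) / Z (resS m) with hr
  have hr0 : ∀ m, 0 ≤ r m := by
    intro m
    rw [hr]
    dsimp only
    split_ifs
    · exact zero_le_one
    · exact le_rfl
    · exact div_nonneg (hqD0 _) (hZ0 _)
  set G : ({v // ¬ v ∈ B} → M) → ℝ := margTo Subtype.val Q with hG
  set Q' : (V → M) → ℝ := fun m =>
    r m * G (fun v : {v // ¬ v ∈ B} => m v.1) with hQ'
  have hresSg : ∀ y c, resS (glue B y c) = fun v : {v // v ∈ S} => c ⟨v.1, hSB v.1 v.2⟩ := by
    intro y c; funext v
    exact glue_of_not_mem B y c (hSB v.1 v.2)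
  have hresNg : ∀ y (c : {v // ¬ v ∈ B} → M),
      (fun v : {v // ¬ v ∈ B} => glue B y c v.1) = c := by
    intro y c; funext v
    exact glue_of_not_mem B y c v.2
  have hQ'g : ∀ y c, Q' (glue B y c) = r (glue B y c) * G c := by
    intro y c; rw [hQ']; dsimp only; rw [hresNg]
  -- summing qD over the B-coordinates gives Z
  have inner_sum : ∀ c : {v // ¬ v ∈ B} → M,
      ∑ y : {v // v ∈ B} → M, qD (resD (glue B y c))
        = Z (fun v : {v // v ∈ S} => c ⟨v.1, hSB v.1 v.2⟩) := by
    intro c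
    rw [hZ]
    unfold margTo
    rw [← Finset.sum_filter]
    refine Finset.sum_nbij' (fun y => resD (glue B y c))
      (fun x => fun v : {v // v ∈ B} => x ⟨v.1, hBD v.2⟩) ?_ ?_ ?_ ?_ ?_
    · intro y _
      simp only [Finset.mem_filter, Finset.mem_univ, true_and]
      intro v
      exact glue_of_not_mem B y c (hSB v.1 v.2)
    · intro x _; exact Finset.mem_univ _
    · intro y _
      funext v
      exact glue_of_mem B y c v.2
    · intro x hx
      simp only [Finset.mem_filter, Finset.mem_univ, true_and] at hx
      funext v
      by_cases hvB : v.1 ∈ B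
      · exact (glue_of_mem B _ c hvB).trans (congrArg x (Subtype.ext rfl))
      · have hvS : v.1 ∈ S := by
          by_contra hvS
          exact hvB (hB ▸ Finset.mem_sdiff.mpr ⟨v.2, hvS⟩)
        exact (glue_of_not_mem B _ c hvB).trans
          ((hx ⟨v.1, hvS⟩).symm.trans (congrArg x (Subtype.ext rfl)))
    · intro y _; rfl
  -- the kernel r sums to 1 over the B-coordinates
  have r1 : ∀ c : {v // ¬ v ∈ B} → M, ∑ y : {v // v ∈ B} → M, r (glue B y c) = 1 := by
    intro c
    by_cases hz : Z (fun v : {v // v ∈ S} => c ⟨v.1, hSB v.1 v.2⟩) = 0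
    · have hterm : ∀ y : {v // v ∈ B} → M,
          r (glue B y c) = if y = (fun _ => default) then 1 else 0 := by
        intro y
        rw [hr]
        dsimp only
        rw [hresSg y c, if_pos hz]
        congr 1
        rw [eq_iff_iff]
        constructor
        · intro h
          funext v
          rw [← h v, glue_of_mem B y c v.2]
        · intro h v
          rw [glue_of_mem B y c v.2, h]
      simp_rw [hterm]
      rw [Finset.sum_ite_eq' Finset.univ (fun _ => default) (fun _ => (1 : ℝ))]
      simp
    · have hterm : ∀ y : {v // v ∈ B} → M,
          r (glue B y c) = qD (resD (glue B y c)) /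
            Z (fun v : {v // v ∈ S} => c ⟨v.1, hSB v.1 v.2⟩) := by
        intro y
        rw [hr]
        dsimp only
        rw [hresSg y c, if_neg hz]
      simp_rw [hterm]
      rw [← Finset.sum_div, inner_sum c, div_self hz]
  refine ⟨Q', fun m => mul_nonneg (hr0 m) (margTo_nonneg _ Q hQ0 _), ?_, ?_⟩
  · -- marginal on D is qD
    intro e
    set eB : {v // v ∈ B} → M := fun v => e ⟨v.1, hBD v.2⟩ with heB
    set eS : {v // v ∈ S} → M := fun v => e ⟨v.1, hSD v.2⟩ with heS
    have hsplit : ∀ y c, (∀ v : {v // v ∈ D}, glue B y c v.1 = e v) ↔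
        ((y = eB) ∧ ∀ v : {v // v ∈ S}, c ⟨v.1, hSB v.1 v.2⟩ = eS v) := by
      intro y c
      constructor
      · intro h
        refine ⟨funext fun v => ?_, fun v => ?_⟩
        · rw [← glue_of_mem B y c v.2]
          exact (h ⟨v.1, hBD v.2⟩).trans rfl
        · rw [← glue_of_not_mem B y c (hSB v.1 v.2)]
          exact (h ⟨v.1, hSD v.2⟩).trans rfl
      · rintro ⟨h1, h2⟩ v
        by_cases hv : v.1 ∈ B
        · rw [glue_of_mem B y c hv, h1]
        · have hvS : v.1 ∈ S := by
            by_contra hvS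
            exact hv (hB ▸ Finset.mem_sdiff.mpr ⟨v.2, hvS⟩)
          rw [glue_of_not_mem B y c hv]
          exact ((h2 ⟨v.1, hvS⟩).trans rfl : c ⟨v.1, hv⟩ = e v)
    show (∑ m : V → M, if (∀ v : {v // v ∈ D}, m v.1 = e v) then Q' m else 0) = qD e
    rw [sum_glue B (fun m => if (∀ v : {v // v ∈ D}, m v.1 = e v) then Q' m else 0)]
    have hrw : ∀ y c, (if (∀ v : {v // v ∈ D}, glue B y c v.1 = e v)
          then Q' (glue B y c) else 0)
        = if y = eB then (if (∀ v : {v // v ∈ S}, c ⟨v.1, hSB v.1 v.2⟩ = eS v)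
            then r (glue B y c) * G c else 0) else 0 := by
      intro y c
      rw [hQ'g]
      by_cases h : ∀ v : {v // v ∈ D}, glue B y c v.1 = e v
      · obtain ⟨h1, h2⟩ := (hsplit y c).mp h
        rw [if_pos h, if_pos h1, if_pos h2]
      · rw [if_neg h]
        by_cases h1 : y = eB
        · by_cases h2 : ∀ v : {v // v ∈ S}, c ⟨v.1, hSB v.1 v.2⟩ = eS v
          · exact absurd ((hsplit y c).mpr ⟨h1, h2⟩) h
          · rw [if_pos h1, if_neg h2]
        · rw [if_neg h1]
    simp_rw [hrw]
    rw [Finset.sum_comm]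
    have hcol : ∀ c : {v // ¬ v ∈ B} → M,
        (∑ y : {v // v ∈ B} → M, if y = eB then
            (if (∀ v : {v // v ∈ S}, c ⟨v.1, hSB v.1 v.2⟩ = eS v)
              then r (glue B y c) * G c else 0) else 0)
        = if (∀ v : {v // v ∈ S}, c ⟨v.1, hSB v.1 v.2⟩ = eS v)
            then r (glue B eB c) * G c else 0 := by
      intro c
      rw [Finset.sum_ite_eq' Finset.univ eB]
      simp
    simp_rw [hcol]
    -- evaluate r on glue B eB c when the S-condition holds
    set ρ : ℝ := if Z eS = 0 then (if (∀ v : {v // v ∈ B}, eB v = default) then 1 else 0)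
      else qD e / Z eS with hρ
    have hrval : ∀ c : {v // ¬ v ∈ B} → M,
        (∀ v : {v // v ∈ S}, c ⟨v.1, hSB v.1 v.2⟩ = eS v) → r (glue B eB c) = ρ := by
      intro c hc
      rw [hr]
      dsimp only
      have h1 : resS (glue B eB c) = eS := by
        rw [hresSg]; funext v; exact hc v
      have h2 : resD (glue B eB c) = e := by
        funext v
        show glue B eB c v.1 = e v
        exact (hsplit eB c).mpr ⟨rfl, hc⟩ v
      rw [h1, h2, hρ]
      by_cases hz : Z eS = 0
      · rw [if_pos hz, if_pos hz]
        have hiff : (∀ v : {v // v ∈ B}, glue B eB c v.1 = default)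
            ↔ (∀ v : {v // v ∈ B}, eB v = default) :=
          forall_congr' fun v => by rw [glue_of_mem B eB c v.2]
        exact if_congr hiff rfl rfl
      · rw [if_neg hz, if_neg hz]
    have hsum2 : (∑ c : {v // ¬ v ∈ B} → M,
        if (∀ v : {v // v ∈ S}, c ⟨v.1, hSB v.1 v.2⟩ = eS v)
          then r (glue B eB c) * G c else 0)
        = ρ * ∑ c : {v // ¬ v ∈ B} → M,
            (if (∀ v : {v // v ∈ S}, c ⟨v.1, hSB v.1 v.2⟩ = eS v)
              then G c else 0) := by
      rw [Finset.mul_sum]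
      refine Finset.sum_congr rfl fun c _ => ?_
      by_cases h : ∀ v : {v // v ∈ S}, c ⟨v.1, hSB v.1 v.2⟩ = eS v
      · rw [if_pos h, if_pos h, hrval c h]
      · rw [if_neg h, if_neg h, mul_zero]
    rw [hsum2]
    have hmargS : (∑ c : {v // ¬ v ∈ B} → M,
        if (∀ v : {v // v ∈ S}, c ⟨v.1, hSB v.1 v.2⟩ = eS v)
          then G c else 0) = Z eS := by
      have h1 : (∑ c : {v // ¬ v ∈ B} → M,
          if (∀ v : {v // v ∈ S}, c ⟨v.1, hSB v.1 v.2⟩ = eS v)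
            then G c else 0)
          = margTo (fun v : {v // v ∈ S} => (⟨v.1, hSB v.1 v.2⟩ : {v // ¬ v ∈ B})) G eS := rfl
      rw [h1, hG, margTo_comp]
      exact hmatch eS
    rw [hmargS]
    by_cases hz : Z eS = 0
    · have hqe : qD e = 0 := by
        refine le_antisymm ?_ (hqD0 e)
        have := le_margTo (fun v : {v // v ∈ S} => (⟨v.1, hSD v.2⟩ : {v // v ∈ D}))
          qD hqD0 eS e (fun v => rfl)
        rw [← hZ] at this
        rw [← hz]
        exact this
      rw [hz, mul_zero, hqe]
    · rw [hρ, if_neg hz, div_mul_cancel₀ _ hz]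
  · -- marginals over sets avoiding D \ S are preserved
    intro E hE e
    have hEB : ∀ v : {v // v ∈ E}, ¬ v.1 ∈ B := fun v => hB ▸ hE v.1 v.2
    show (∑ m : V → M, if (∀ v : {v // v ∈ E}, m v.1 = e v) then Q' m else 0)
      = margTo Subtype.val Q e
    rw [sum_glue B (fun m => if (∀ v : {v // v ∈ E}, m v.1 = e v) then Q' m else 0)]
    have hcondE : ∀ y c, (∀ v : {v // v ∈ E}, glue B y c v.1 = e v) ↔
        (∀ v : {v // v ∈ E}, c ⟨v.1, hEB v⟩ = e v) := by
      intro y c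
      refine forall_congr' fun v => ?_
      rw [glue_of_not_mem B y c (hEB v)]
    have hrw : ∀ y c, (if (∀ v : {v // v ∈ E}, glue B y c v.1 = e v)
          then Q' (glue B y c) else 0)
        = if (∀ v : {v // v ∈ E}, c ⟨v.1, hEB v⟩ = e v)
            then r (glue B y c) * G c else 0 := by
      intro y c
      rw [hQ'g]
      by_cases h : ∀ v : {v // v ∈ E}, c ⟨v.1, hEB v⟩ = e v
      · rw [if_pos h, if_pos ((hcondE y c).mpr h)]
      · rw [if_neg h, if_neg (fun hh => h ((hcondE y c).mp hh))]
    simp_rw [hrw]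
    rw [Finset.sum_comm]
    have hcol : ∀ c : {v // ¬ v ∈ B} → M,
        (∑ y : {v // v ∈ B} → M, if (∀ v : {v // v ∈ E}, c ⟨v.1, hEB v⟩ = e v)
            then r (glue B y c) * G c else 0)
        = if (∀ v : {v // v ∈ E}, c ⟨v.1, hEB v⟩ = e v)
            then G c else 0 := by
      intro c
      by_cases h : ∀ v : {v // v ∈ E}, c ⟨v.1, hEB v⟩ = e v
      · simp_rw [if_pos h]
        rw [← Finset.sum_mul, r1 c, one_mul]
      · simp_rw [if_neg h]
        exact Finset.sum_const_zero
    simp_rw [hcol]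
    have h1 : (∑ c : {v // ¬ v ∈ B} → M,
        if (∀ v : {v // v ∈ E}, c ⟨v.1, hEB v⟩ = e v)
          then G c else 0)
        = margTo (fun v : {v // v ∈ E} => (⟨v.1, hEB v⟩ : {v // ¬ v ∈ B})) G e := rfl
    rw [h1, hG, margTo_comp]
    have hfun : (Subtype.val ∘ fun v : {v // v ∈ E} => (⟨v.1, hEB v⟩ : {v // ¬ v ∈ B}))
        = (Subtype.val : {v // v ∈ E} → V) := rfl
    rw [hfun]

end step
section graph
open SimpleGraph

lemma cross_edge {K : ℕ} (T : SimpleGraph (Fin K)) (P : Finset (Fin K)) :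
    ∀ {x y : Fin K} (_ : T.Walk x y), x ∉ P → y ∈ P →
      ∃ ℓ p, ℓ ∉ P ∧ p ∈ P ∧ T.Adj ℓ p := by
  intro x y w
  induction w with
  | nil => intro hx hy; exact absurd hy hx
  | @cons a b c h w ih =>
    intro hx hy
    by_cases hm : b ∈ P
    · exact ⟨a, b, hx, hm, h⟩
    · exact ih hm hy

lemma conn_insert {K : ℕ} (T : SimpleGraph (Fin K)) (P : Finset (Fin K))
    (hconn : ∀ a ∈ P, ∀ b ∈ P, ∃ w : T.Walk a b, ∀ x ∈ w.support, x ∈ P)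
    {ℓ p : Fin K} (hp : p ∈ P) (hadj : T.Adj ℓ p) :
    ∀ a ∈ insert ℓ P, ∀ b ∈ insert ℓ P, ∃ w : T.Walk a b, ∀ x ∈ w.support, x ∈ insert ℓ P := by
  intro a ha b hb
  rcases Finset.mem_insert.mp ha with rfl | haP
  · rcases Finset.mem_insert.mp hb with rfl | hbP
    · exact ⟨Walk.nil, by simp⟩
    · obtain ⟨w0, hw0⟩ := hconn p hp b hbP
      refine ⟨Walk.cons hadj w0, ?_⟩
      intro x hx
      rw [Walk.support_cons] at hx
      rcases List.mem_cons.mp hx with rfl | hx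
      · exact Finset.mem_insert_self _ _
      · exact Finset.mem_insert_of_mem (hw0 x hx)
  · rcases Finset.mem_insert.mp hb with rfl | hbP
    · obtain ⟨w0, hw0⟩ := hconn p hp a haP
      refine ⟨(Walk.cons hadj w0).reverse, ?_⟩
      intro x hx
      rw [Walk.support_reverse, List.mem_reverse, Walk.support_cons] at hx
      rcases List.mem_cons.mp hx with rfl | hx
      · exact Finset.mem_insert_self _ _
      · exact Finset.mem_insert_of_mem (hw0 x hx)
    · obtain ⟨w0, hw0⟩ := hconn a haP b hbP
      exact ⟨w0, fun x hx => Finset.mem_insert_of_mem (hw0 x hx)⟩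

lemma path_through {K : ℕ} (T : SimpleGraph (Fin K)) (P : Finset (Fin K))
    (hconn : ∀ a ∈ P, ∀ b ∈ P, ∃ w : T.Walk a b, ∀ x ∈ w.support, x ∈ P)
    {ℓ p s : Fin K} (hℓ : ℓ ∉ P) (hp : p ∈ P) (hs : s ∈ P) (hadj : T.Adj ℓ p) :
    ∃ w : T.Walk ℓ s, w.IsPath ∧ p ∈ w.support := by
  obtain ⟨w0, hw0⟩ := hconn p hp s hs
  have hq : w0.bypass.IsPath := Walk.bypass_isPath w0
  have hsup : ∀ x ∈ w0.bypass.support, x ∈ P :=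
    fun x hx => hw0 x (Walk.support_bypass_subset w0 hx)
  have hℓq : ℓ ∉ w0.bypass.support := fun h => hℓ (hsup ℓ h)
  refine ⟨Walk.cons hadj w0.bypass, hq.cons hℓq, ?_⟩
  rw [Walk.support_cons]
  exact List.mem_cons_of_mem _ (Walk.start_mem_support _)

end graph

section main
open SimpleGraph

lemma up {K : ℕ} (T : SimpleGraph (Fin K)) (hT : T.IsTree)
    {V M : Type*} [Fintype V] [DecidableEq V] [Fintype M] [DecidableEq M] [Inhabited M]
    (C : Fin K → Finset V)
    (hRIP : ∀ (i j k : Fin K) (p : T.Walk i j), p.IsPath → k ∈ p.support →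
      C i ∩ C j ⊆ C k)
    (q : ∀ i, ({v // v ∈ C i} → M) → ℝ)
    (hq0 : ∀ i m, 0 ≤ q i m)
    (hcons : ∀ i l, T.Adj i l → ∀ g : {v // v ∈ C i ∩ C l} → M,
      (∑ m : {v // v ∈ C i} → M,
        if (∀ v : {v // v ∈ C i ∩ C l}, m ⟨v.1, (Finset.mem_inter.mp v.2).1⟩ = g v)
        then q i m else 0) =
      (∑ m : {v // v ∈ C l} → M,
        if (∀ v : {v // v ∈ C i ∩ C l}, m ⟨v.1, (Finset.mem_inter.mp v.2).2⟩ = g v)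
        then q l m else 0)) :
    ∀ n (P : Finset (Fin K)), (Finset.univ \ P).card ≤ n → P.Nonempty →
      (∀ a ∈ P, ∀ b ∈ P, ∃ w : T.Walk a b, ∀ x ∈ w.support, x ∈ P) →
      ∀ Q : (V → M) → ℝ, (∀ m, 0 ≤ Q m) →
      (∀ i ∈ P, ∀ e, margTo Subtype.val Q e = q i e) →
      ∃ Q' : (V → M) → ℝ, (∀ m, 0 ≤ Q' m) ∧ (∑ m, Q' m = ∑ m, Q m) ∧
        (∀ i e, margTo Subtype.val Q' e = q i e) := by
  intro n
  induction n with
  | zero =>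
    intro P hcard _ _ Q hQ0 hmarg
    have hP : ∀ i, i ∈ P := by
      intro i
      by_contra hi
      have hmem : i ∈ Finset.univ \ P := Finset.mem_sdiff.mpr ⟨Finset.mem_univ _, hi⟩
      have : (Finset.univ \ P).card ≠ 0 := Finset.card_ne_zero_of_mem hmem
      omega
    exact ⟨Q, hQ0, rfl, fun i e => hmarg i (hP i) e⟩
  | succ n ih =>
    intro P hcard hPne hconn Q hQ0 hmarg
    by_cases hP : ∀ i, i ∈ P
    · exact ⟨Q, hQ0, rfl, fun i e => hmarg i (hP i) e⟩
    · push_neg at hP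
      obtain ⟨x, hx⟩ := hP
      obtain ⟨y, hy⟩ := hPne
      obtain ⟨w⟩ := hT.isConnected.preconnected x y
      obtain ⟨ℓ, p, hℓ, hp, hadj⟩ := cross_edge T P w hx hy
      have hSD : C ℓ ∩ C p ⊆ C ℓ := Finset.inter_subset_left
      have hthrough : ∀ s ∈ P, C ℓ ∩ C s ⊆ C p := by
        intro s hs
        obtain ⟨w', hw'path, hpw'⟩ := path_through T P hconn hℓ hp hs hadj
        exact hRIP ℓ s p w' hw'path hpw'
      have hmatch : ∀ s : {v // v ∈ C ℓ ∩ C p} → M,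
          margTo Subtype.val Q s
            = margTo (fun v : {v // v ∈ C ℓ ∩ C p} =>
                (⟨v.1, hSD v.2⟩ : {v // v ∈ C ℓ})) (q ℓ) s := by
        intro s
        have e1 : margTo (Subtype.val : {v // v ∈ C ℓ ∩ C p} → V) Q s
            = margTo ((Subtype.val : {v // v ∈ C p} → V) ∘
                (fun v : {v // v ∈ C ℓ ∩ C p} =>
                  (⟨v.1, (Finset.mem_inter.mp v.2).2⟩ : {v // v ∈ C p}))) Q s := rfl
        rw [e1, ← margTo_comp]
        have e2 : margTo (Subtype.val : {v // v ∈ C p} → V) Q = q p :=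
          funext (hmarg p hp)
        rw [e2]
        exact (hcons ℓ p hadj s).symm
      obtain ⟨Q', hQ'0, hQ'D, hQ'E⟩ :=
        step Q hQ0 (C ℓ) (C ℓ ∩ C p) hSD (q ℓ) (hq0 ℓ) hmatch
      have hIE : IsEmpty {v : V // v ∈ (∅ : Finset V)} :=
        ⟨fun v => Finset.notMem_empty _ v.2⟩
      haveI := hIE
      have hsum : ∑ m, Q' m = ∑ m, Q m := by
        have hE0 := hQ'E ∅ (by simp) (fun v => (hIE.elim v))
        rw [margTo_of_isEmpty, margTo_of_isEmpty] at hE0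
        exact hE0
      have hcard' : (Finset.univ \ insert ℓ P).card ≤ n := by
        have hmem : ℓ ∈ Finset.univ \ P := Finset.mem_sdiff.mpr ⟨Finset.mem_univ _, hℓ⟩
        rw [Finset.sdiff_insert, Finset.card_erase_of_mem hmem]
        omega
      have hmarg' : ∀ i ∈ insert ℓ P, ∀ e : {v // v ∈ C i} → M,
          margTo Subtype.val Q' e = q i e := by
        intro i hi e
        rcases Finset.mem_insert.mp hi with rfl | hiP
        · exact hQ'D e
        · have hdisj : ∀ v ∈ C i, v ∉ C ℓ \ (C ℓ ∩ C p) := by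
            intro v hv hvB
            obtain ⟨hv1, hv2⟩ := Finset.mem_sdiff.mp hvB
            exact hv2 (Finset.mem_inter.mpr ⟨hv1,
              hthrough i hiP (Finset.mem_inter.mpr ⟨hv1, hv⟩)⟩)
          exact (hQ'E (C i) hdisj e).trans (hmarg i hiP e)
      obtain ⟨Q'', h0, h1, h2⟩ := ih (insert ℓ P) hcard' ⟨ℓ, Finset.mem_insert_self _ _⟩
        (conn_insert T P hconn hp hadj) Q' hQ'0 hmarg'
      exact ⟨Q'', h0, h1.trans hsum, h2⟩

end main
/-- consistent local pmfs on the bags of a tree with the running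
intersection property extend to a joint pmf with the prescribed marginals. -/
theorem stmt9 {K : ℕ} (T : SimpleGraph (Fin K)) (hT : T.IsTree)
    {V M : Type*} [Fintype V] [DecidableEq V] [Fintype M] [DecidableEq M]
    (C : Fin K → Finset V) (hcover : ∀ v, ∃ i, v ∈ C i)
    (hRIP : ∀ (i j k : Fin K) (p : T.Walk i j), p.IsPath → k ∈ p.support →
      C i ∩ C j ⊆ C k)
    (q : ∀ i, ({v // v ∈ C i} → M) → ℝ)
    (hq0 : ∀ i m, 0 ≤ q i m) (hq1 : ∀ i, ∑ m, q i m = 1)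
    (hcons : ∀ i l, T.Adj i l → ∀ g : {v // v ∈ C i ∩ C l} → M,
      (∑ m : {v // v ∈ C i} → M,
        if (∀ v : {v // v ∈ C i ∩ C l}, m ⟨v.1, (Finset.mem_inter.mp v.2).1⟩ = g v)
        then q i m else 0) =
      (∑ m : {v // v ∈ C l} → M,
        if (∀ v : {v // v ∈ C i ∩ C l}, m ⟨v.1, (Finset.mem_inter.mp v.2).2⟩ = g v)
        then q l m else 0)) :
    ∃ Q : (V → M) → ℝ, (∀ m, 0 ≤ Q m) ∧ (∑ m, Q m = 1) ∧
      ∀ i (m' : {v // v ∈ C i} → M),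
        (∑ m : V → M, if (∀ v : {v // v ∈ C i}, m v.1 = m' v) then Q m else 0) =
          q i m' := by
  classical
  rcases isEmpty_or_nonempty M with hM | hM
  · -- M is empty: every bag must be empty, hence V is empty
    have hCempty : ∀ i, IsEmpty {v // v ∈ C i} := by
      intro i
      by_contra h
      rw [not_isEmpty_iff] at h
      obtain ⟨v⟩ := h
      haveI : IsEmpty ({v // v ∈ C i} → M) := ⟨fun f => hM.elim (f v)⟩
      have h1 := hq1 i
      rw [Finset.univ_eq_empty, Finset.sum_empty] at h1
      exact one_ne_zero h1.symm
    haveI hVempty : IsEmpty V := by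
      refine ⟨fun v => ?_⟩
      obtain ⟨i, hv⟩ := hcover v
      exact (hCempty i).elim ⟨v, hv⟩
    haveI : Unique (V → M) := Pi.uniqueOfIsEmpty _
    refine ⟨fun _ => 1, fun _ => zero_le_one, ?_, ?_⟩
    · rw [Fintype.sum_unique]
    · intro i m'
      haveI := hCempty i
      haveI : Unique ({v // v ∈ C i} → M) := Pi.uniqueOfIsEmpty _
      have h1 := hq1 i
      rw [Fintype.sum_unique] at h1
      rw [Fintype.sum_unique, if_pos (fun v => ((hCempty i).elim v)),
        Unique.eq_default m', h1]
  · -- M is nonempty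
    haveI : Inhabited M := Classical.inhabited_of_nonempty hM
    obtain ⟨i0⟩ := hT.isConnected.nonempty
    -- uniform initial distribution
    set Q0 : (V → M) → ℝ := fun _ => ((Fintype.card (V → M) : ℝ))⁻¹ with hQ0def
    have hcardpos : (0 : ℝ) < (Fintype.card (V → M) : ℝ) := by
      have : 0 < Fintype.card (V → M) :=
        Fintype.card_pos_iff.mpr ⟨fun _ => default⟩
      exact_mod_cast this
    have hQ00 : ∀ m, 0 ≤ Q0 m := fun m => inv_nonneg.mpr hcardpos.le
    have hQ01 : ∑ m, Q0 m = 1 := by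
      rw [hQ0def]
      rw [Finset.sum_const, Finset.card_univ, nsmul_eq_mul, mul_inv_cancel₀ hcardpos.ne']
    haveI hIE : IsEmpty {v : V // v ∈ (∅ : Finset V)} :=
      ⟨fun v => Finset.notMem_empty _ v.2⟩
    have hmatch0 : ∀ s : {v // v ∈ (∅ : Finset V)} → M,
        margTo Subtype.val Q0 s
          = margTo (fun v : {v // v ∈ (∅ : Finset V)} =>
              (⟨v.1, (Finset.empty_subset (C i0)) v.2⟩ : {v // v ∈ C i0})) (q i0) s := by
      intro s
      rw [margTo_of_isEmpty, margTo_of_isEmpty, hQ01, hq1 i0]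
    obtain ⟨Q1, hQ10, hQ1D, hQ1E⟩ :=
      step Q0 hQ00 (C i0) ∅ (Finset.empty_subset (C i0)) (q i0) (hq0 i0) hmatch0
    have hsum1 : ∑ m, Q1 m = 1 := by
      have hE0 := hQ1E ∅ (by simp) (fun v => (hIE.elim v))
      rw [margTo_of_isEmpty, margTo_of_isEmpty] at hE0
      exact hE0.trans hQ01
    have hconn0 : ∀ a ∈ ({i0} : Finset (Fin K)), ∀ b ∈ ({i0} : Finset (Fin K)),
        ∃ w : T.Walk a b, ∀ x ∈ w.support, x ∈ ({i0} : Finset (Fin K)) := by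
      intro a ha b hb
      rw [Finset.mem_singleton] at ha hb
      subst ha; subst hb
      exact ⟨SimpleGraph.Walk.nil, by simp⟩
    have hmarg0 : ∀ i ∈ ({i0} : Finset (Fin K)), ∀ e : {v // v ∈ C i} → M,
        margTo Subtype.val Q1 e = q i e := by
      intro i hi e
      rw [Finset.mem_singleton] at hi
      subst hi
      exact hQ1D e
    obtain ⟨Q', h0, h1, h2⟩ := up T hT C hRIP q hq0 hcons
      (Finset.univ \ ({i0} : Finset (Fin K))).card ({i0} : Finset (Fin K)) le_rfl
      ⟨i0, Finset.mem_singleton_self i0⟩ hconn0 Q1 hQ10 hmarg0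
    exact ⟨Q', h0, h1.trans hsum1, fun i m' => h2 i m'⟩
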